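/- Let F be an infinite field, N ≥ 1, and let D = (C_1,…,C_r) be a diagram with pairwise distinct columns contained in {1,…,N} that is closed under intersections (for every nonempty S ⊆ {1,…,r}, the set ⋂_{j∈S} C_j equals some column of D). Let V_1,…,V_r be subspaces of F^N with dim V_j = |C_j| for all j and V_j ⊆ V_k whenever C_j ⊆ C_k. Then the following are equivalent: (i) each V_j is invariant under every invertible diagonal N × N matrix over F; (ii) there is a standard column tabloid t for D, i.e. an assignment to each column C_j of a subset t(C_j) ⊆ {1,…,N} with |t(C_j)| = |C_j| such that C_j ⊆ C_k implies t(C_j) ⊆ t(C_k), with V_j = span{e_i : i ∈ t(C_j)} for all j, where e_1,…,e_N is the standard basis of F^N. -/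

import Mathlib

/-- A subspace of `F^N` invariant under all invertible diagonal matrices is
invariant under coordinatewise multiplication by any vector. -/
lemma diag_inv_all {F : Type} [Field F] [Infinite F] {N : ℕ}
    (V : Submodule F (Fin N → F))
    (hV : ∀ x : Fin N → F, (∀ i, x i ≠ 0) → ∀ v ∈ V, (fun k => x k * v k) ∈ V)
    (d : Fin N → F) {v : Fin N → F} (hv : v ∈ V) :
    (fun k => d k * v k) ∈ V := by
  classical
  have hchoice : ∀ k : Fin N, ∃ a : F, a ≠ 0 ∧ a ≠ d k := by
    intro k
    obtain ⟨a, ha⟩ := Infinite.exists_notMem_finset ({0, d k} : Finset F)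
    simp only [Finset.mem_insert, Finset.mem_singleton, not_or] at ha
    exact ⟨a, ha.1, ha.2⟩
  choose x hx0 hxd using hchoice
  have h1 : (fun k => x k * v k) ∈ V := hV x hx0 v hv
  have h2 : (fun k => (x k - d k) * v k) ∈ V :=
    hV (fun k => x k - d k) (fun k => sub_ne_zero.mpr (hxd k)) v hv
  have heq : (fun k => d k * v k) =
      (fun k => x k * v k) - (fun k => (x k - d k) * v k) := by
    funext k
    simp only [Pi.sub_apply]
    ring
  rw [heq]
  exact Submodule.sub_mem V h1 h2

/-- Such a subspace contains the coordinate projections of each of its vectors. -/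
lemma single_mem {F : Type} [Field F] [Infinite F] {N : ℕ}
    (V : Submodule F (Fin N → F))
    (hV : ∀ x : Fin N → F, (∀ i, x i ≠ 0) → ∀ v ∈ V, (fun k => x k * v k) ∈ V)
    (i : Fin N) {v : Fin N → F} (hv : v ∈ V) :
    (Pi.single i (v i) : Fin N → F) ∈ V := by
  have h := diag_inv_all V hV (Pi.single i (1 : F)) hv
  have heq : (fun k => (Pi.single i (1 : F) : Fin N → F) k * v k) =
      (Pi.single i (v i) : Fin N → F) := by
    funext k
    by_cases hk : k = i
    · subst hk; simp
    · simp [Pi.single_apply, hk]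
  rwa [heq] at h

open scoped Classical in
/-- A diagonally invariant subspace is the span of the standard basis vectors it contains. -/
lemma eq_span_singles {F : Type} [Field F] [Infinite F] {N : ℕ}
    (V : Submodule F (Fin N → F))
    (hV : ∀ x : Fin N → F, (∀ i, x i ≠ 0) → ∀ v ∈ V, (fun k => x k * v k) ∈ V) :
    V = Submodule.span F
      ((fun i : Fin N => (Pi.single i (1 : F) : Fin N → F)) ''
        ((Finset.univ.filter
            (fun i : Fin N => (Pi.single i (1 : F) : Fin N → F) ∈ V) : Finset (Fin N)) :
          Set (Fin N))) := by
  apply le_antisymm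
  · intro v hv
    have hv' : v = ∑ i : Fin N, (Pi.single i (v i) : Fin N → F) :=
      (Finset.univ_sum_single v).symm
    rw [hv']
    apply Submodule.sum_mem
    intro i _
    by_cases h0 : v i = 0
    · rw [h0]; simp
    · have hsv : (Pi.single i (v i) : Fin N → F) ∈ V := single_mem V hV i hv
      have he : (Pi.single i (1 : F) : Fin N → F) ∈ V := by
        have hsm := V.smul_mem (v i)⁻¹ hsv
        rwa [← Pi.single_smul, smul_eq_mul, inv_mul_cancel₀ h0] at hsm
      have heq : (Pi.single i (v i) : Fin N → F) =
          (v i) • (Pi.single i (1 : F) : Fin N → F) := by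
        rw [← Pi.single_smul, smul_eq_mul, mul_one]
      rw [heq]
      apply Submodule.smul_mem
      apply Submodule.subset_span
      exact ⟨i, by simp [he], rfl⟩
  · rw [Submodule.span_le]
    rintro _ ⟨i, hi, rfl⟩
    simp only [Finset.coe_filter, Set.mem_setOf_eq] at hi
    exact hi.2

lemma finrank_span_singles {F : Type} [Field F] {N : ℕ} (s : Finset (Fin N)) :
    Module.finrank F (Submodule.span F
      ((fun i : Fin N => (Pi.single i (1 : F) : Fin N → F)) '' (s : Set (Fin N)))) = s.card := by
  classical
  have hli : LinearIndependent F (fun i : Fin N => (Pi.single i (1 : F) : Fin N → F)) := by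
    have h := (Pi.basisFun F (Fin N)).linearIndependent
    have heq : ⇑(Pi.basisFun F (Fin N)) =
        (fun i : Fin N => (Pi.single i (1 : F) : Fin N → F)) :=
      funext fun i => Pi.basisFun_apply F (Fin N) i
    rwa [heq] at h
  have hinjf : Function.Injective (fun i : Fin N => (Pi.single i (1 : F) : Fin N → F)) :=
    hli.injective
  have hli' : LinearIndependent F
      ((↑) : ((fun i : Fin N => (Pi.single i (1 : F) : Fin N → F)) '' (s : Set (Fin N))) →
        (Fin N → F)) := by
    exact LinearIndepOn.mono ((linearIndepOn_id_range_iff hinjf).mpr hli)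
      (Set.image_subset_range _ _)
  rw [finrank_span_set_eq_card hli', Set.toFinset_image,
    Finset.card_image_of_injective _ hinjf]
  simp

theorem diagonal_invariant_iff_tabloid
    (F : Type) [Field F] [Infinite F] (N r : ℕ) (hN : 1 ≤ N)
    (C : Fin r → Finset ℕ) (hinj : Function.Injective C)
    (hsub : ∀ j, C j ⊆ Finset.Icc 1 N)
    (hclosed : ∀ (S : Finset (Fin r)) (hS : S.Nonempty), ∃ j, S.inf' hS C = C j)
    (V : Fin r → Submodule F (Fin N → F))
    (hdim : ∀ j, Module.finrank F (V j) = (C j).card)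
    (hmono : ∀ j k, C j ⊆ C k → V j ≤ V k) :
    (∀ x : Fin N → F, (∀ i, x i ≠ 0) →
        ∀ j, ∀ v ∈ V j, (Matrix.diagonal x).mulVec v ∈ V j) ↔
      ∃ t : Fin r → Finset (Fin N),
        (∀ j, (t j).card = (C j).card) ∧
        (∀ j k, C j ⊆ C k → t j ⊆ t k) ∧
        (∀ j, V j = Submodule.span F
          ((fun i : Fin N => (Pi.single i (1 : F) : Fin N → F)) '' (t j : Set (Fin N)))) := by
  classical
  constructor
  · intro hinv
    have hmul : ∀ j, ∀ x : Fin N → F, (∀ i, x i ≠ 0) →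
        ∀ v ∈ V j, (fun k => x k * v k) ∈ V j := by
      intro j x hx v hv
      have h := hinv x hx j v hv
      have hd : (Matrix.diagonal x).mulVec v = fun k => x k * v k := by
        funext k; rw [Matrix.mulVec_diagonal]
      rwa [hd] at h
    refine ⟨fun j => Finset.univ.filter
        (fun i : Fin N => (Pi.single i (1 : F) : Fin N → F) ∈ V j), ?_, ?_, ?_⟩
    · intro j
      have hspan := eq_span_singles (V j) (hmul j)
      have hfr := finrank_span_singles (F := F)
        (Finset.univ.filter (fun i : Fin N => (Pi.single i (1 : F) : Fin N → F) ∈ V j))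
      rw [← hspan] at hfr
      rw [← hdim j, hfr]
    · intro j k hjk i hi
      simp only [Finset.mem_filter] at hi ⊢
      exact ⟨hi.1, hmono j k hjk hi.2⟩
    · intro j
      exact eq_span_singles (V j) (hmul j)
  · rintro ⟨t, hcard, htmono, hspan⟩ x hx j v hv
    rw [hspan j] at hv ⊢
    have hmap : Submodule.map ((Matrix.diagonal x).mulVecLin)
        (Submodule.span F
          ((fun i : Fin N => (Pi.single i (1 : F) : Fin N → F)) '' (t j : Set (Fin N)))) ≤
        Submodule.span F
          ((fun i : Fin N => (Pi.single i (1 : F) : Fin N → F)) '' (t j : Set (Fin N))) := by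
      rw [Submodule.map_span, Submodule.span_le]
      rintro _ ⟨_, ⟨i, hi, rfl⟩, rfl⟩
      have heq : (Matrix.diagonal x).mulVecLin (Pi.single i (1 : F)) =
          (x i) • (Pi.single i (1 : F) : Fin N → F) := by
        rw [Matrix.mulVecLin_apply, Matrix.diagonal_mulVec_single, mul_one, ← Pi.single_smul,
          smul_eq_mul, mul_one]
      rw [heq]
      exact Submodule.smul_mem _ _ (Submodule.subset_span ⟨i, hi, rfl⟩)
    exact hmap ⟨v, hv, rfl⟩
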